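/- Let A be a nonempty set, f : A → ℝ, and a⁻ ∈ A with f(a⁻) ≤ f(a) for all a ∈ A, and let ε ≥ 0 be a real number. Let T be a finite binary tree in which each node v carries: a subset P_v ⊆ A with P_root = A and P_v = P_{v₁} ∪ P_{v₂} for every internal node v with children v₁ and v₂; a representative a_v ∈ P_v; and real numbers q(v), m(v), β(v) ≥ 0, r(v) ≥ 0 such that |q(v) − m(v)| ≤ β(v), |m(v) − f(a_v)| ≤ ε, and |f(a) − f(a')| ≤ r(v) for all a, a' ∈ P_v. Define the labeling L(v) = q(v) − β(v) − ε − r(v) and the B-values by the recursion, and let w be the leaf reached by a min-B traverse path. If β(w) ≥ r(w), then m(w) − f(a⁻) ≤ 3·β(w) + ε. -/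
import Mathlib


/-- A finite binary tree: every internal node has exactly two children, and
every node carries a label of type `α`. -/
inductive BTree (α : Type) : Type
  | leaf (a : α) : BTree α
  | node (a : α) (l r : BTree α) : BTree α

namespace BTree

variable {α : Type}

/-- The label of the root of a tree. -/
def label : BTree α → α
  | leaf a => a
  | node a _ _ => a

/-- The list of (the labels of) all nodes of a tree. -/
def nodes : BTree α → List α
  | leaf a => [a]
  | node a l r => a :: (nodes l ++ nodes r)

/-- The `B`-values defined by the recursion `B(v) = L(v)` at a leaf and
`B(v) = max(L(v), min(B(left child), B(right child)))` at an internal node. -/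
noncomputable def Bval (L : α → ℝ) : BTree α → ℝ
  | leaf a => L a
  | node a l r => max (L a) (min (Bval L l) (Bval L r))

/-- `MinBLeaf L t w` : `w` is (the label of) a leaf reached by a min-`B`
traverse path, i.e. a root-to-leaf path which, at every internal node,
continues to a child whose `B`-value is at most that of the other child. -/
def MinBLeaf (L : α → ℝ) : BTree α → α → Prop
  | leaf a, w => w = a
  | node _ l r, w =>
      (Bval L l ≤ Bval L r ∧ MinBLeaf L l w) ∨ (Bval L r ≤ Bval L l ∧ MinBLeaf L r w)

end BTree

/-- The data carried by a node of the action cover tree: a cell `P ⊆ A`, a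
representative `rep ∈ P`, an empirical estimate `q`, its expectation `m`, a
confidence radius `β` and a cell-variation bound `r`. -/
structure NodeData (A : Type) where
  P : Set A
  rep : A
  q : ℝ
  m : ℝ
  β : ℝ
  r : ℝ

/-- Every internal node's cell is the union of the cells of its two children. -/
def BTree.CellCover {A : Type} : BTree (NodeData A) → Prop
  | .leaf _ => True
  | .node d l r => d.P = (BTree.label l).P ∪ (BTree.label r).P ∧
      BTree.CellCover l ∧ BTree.CellCover r

lemma Bval_le_of_mem {A : Type} (f : A → ℝ) (ε : ℝ)
    (t : BTree (NodeData A)) (hcov : BTree.CellCover t)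
    (hnodes : ∀ d ∈ t.nodes,
      d.rep ∈ d.P ∧ 0 ≤ d.β ∧ 0 ≤ d.r ∧
      |d.q - d.m| ≤ d.β ∧ |d.m - f d.rep| ≤ ε ∧
      ∀ a ∈ d.P, ∀ a' ∈ d.P, |f a - f a'| ≤ d.r) :
    ∀ a ∈ t.label.P, BTree.Bval (fun d => d.q - d.β - ε - d.r) t ≤ f a := by
  induction t with
  | leaf d =>
    intro a ha
    obtain ⟨hrep, hβ, hr, hqm, hmf, hvar⟩ := hnodes d (by simp [BTree.nodes])
    have h1 : d.q - d.m ≤ d.β := (abs_le.mp hqm).2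
    have h2 : d.m - f d.rep ≤ ε := (abs_le.mp hmf).2
    have h3 : f d.rep - f a ≤ d.r := (abs_le.mp (hvar d.rep hrep a ha)).2
    simp only [BTree.Bval, BTree.label] at *
    linarith
  | node d l r ihl ihr =>
    intro a ha
    obtain ⟨hunion, hcl, hcr⟩ := hcov
    obtain ⟨hrep, hβ, hr, hqm, hmf, hvar⟩ := hnodes d (by simp [BTree.nodes])
    have hnl : ∀ e ∈ l.nodes, _ := fun e he => hnodes e (by simp [BTree.nodes, he])
    have hnr : ∀ e ∈ r.nodes, _ := fun e he => hnodes e (by simp [BTree.nodes, he])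
    have hLa : d.q - d.β - ε - d.r ≤ f a := by
      have h1 : d.q - d.m ≤ d.β := (abs_le.mp hqm).2
      have h2 : d.m - f d.rep ≤ ε := (abs_le.mp hmf).2
      have h3 : f d.rep - f a ≤ d.r := by
        simp only [BTree.label] at ha
        exact (abs_le.mp (hvar d.rep hrep a ha)).2
      linarith
    simp only [BTree.label] at ha
    rw [hunion] at ha
    simp only [BTree.Bval]
    rcases ha with ha | ha
    · exact max_le hLa (le_trans (min_le_left _ _) (ihl hcl hnl a ha))
    · exact max_le hLa (le_trans (min_le_right _ _) (ihr hcr hnr a ha))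

lemma minBLeaf_le {A : Type} (L : NodeData A → ℝ)
    (t : BTree (NodeData A)) (w : NodeData A) (hw : BTree.MinBLeaf L t w) :
    L w ≤ BTree.Bval L t ∧ w ∈ t.nodes := by
  induction t with
  | leaf d => subst hw; exact ⟨le_refl _, by simp [BTree.nodes]⟩
  | node d l r ihl ihr =>
    rcases hw with ⟨hle, hw⟩ | ⟨hle, hw⟩
    · obtain ⟨h1, h2⟩ := ihl hw
      refine ⟨?_, by simp [BTree.nodes, h2]⟩
      simp only [BTree.Bval]
      exact le_max_of_le_right (le_min h1 (h1.trans hle))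
    · obtain ⟨h1, h2⟩ := ihr hw
      refine ⟨?_, by simp [BTree.nodes, h2]⟩
      simp only [BTree.Bval]
      exact le_max_of_le_right (le_min (h1.trans hle) h1)

/-- Let `A` be a nonempty set, `f : A → ℝ`, and `a⁻ ∈ A` with `f(a⁻) ≤ f(a)`
for all `a ∈ A`, and let `ε ≥ 0` be a real number.  Let `T` be a finite binary
tree in which each node `v` carries: a subset `P_v ⊆ A` with `P_root = A` and
`P_v = P_{v₁} ∪ P_{v₂}` for every internal node `v` with children `v₁, v₂`; a
representative `a_v ∈ P_v`; and real numbers `q(v), m(v), β(v) ≥ 0, r(v) ≥ 0`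
such that `|q(v) − m(v)| ≤ β(v)`, `|m(v) − f(a_v)| ≤ ε`, and
`|f(a) − f(a')| ≤ r(v)` for all `a, a' ∈ P_v`.  Define the labeling
`L(v) = q(v) − β(v) − ε − r(v)` and the `B`-values by the recursion, and let
`w` be the leaf reached by a min-`B` traverse path.  If `β(w) ≥ r(w)`, then
`m(w) − f(a⁻) ≤ 3·β(w) + ε`. -/
theorem stmt_16 {A : Type} (f : A → ℝ) (aMin : A) (hmin : ∀ a, f aMin ≤ f a)
    (ε : ℝ) (hε : 0 ≤ ε)
    (t : BTree (NodeData A))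
    (hroot : t.label.P = Set.univ)
    (hcov : BTree.CellCover t)
    (hnodes : ∀ d ∈ t.nodes,
      d.rep ∈ d.P ∧ 0 ≤ d.β ∧ 0 ≤ d.r ∧
      |d.q - d.m| ≤ d.β ∧ |d.m - f d.rep| ≤ ε ∧
      ∀ a ∈ d.P, ∀ a' ∈ d.P, |f a - f a'| ≤ d.r)
    (w : NodeData A)
    (hw : BTree.MinBLeaf (fun d => d.q - d.β - ε - d.r) t w)
    (hβr : w.r ≤ w.β) :
    w.m - f aMin ≤ 3 * w.β + ε := by
  obtain ⟨hL, hmem⟩ := minBLeaf_le (fun d => d.q - d.β - ε - d.r) t w hw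
  have hB : BTree.Bval (fun d => d.q - d.β - ε - d.r) t ≤ f aMin :=
    Bval_le_of_mem f ε t hcov hnodes aMin (by rw [hroot]; trivial)
  obtain ⟨_, hβ, hr, hqm, _, _⟩ := hnodes w hmem
  have h1 : -w.β ≤ w.q - w.m := (abs_le.mp hqm).1
  have hL' : w.q - w.β - ε - w.r ≤ BTree.Bval (fun d => d.q - d.β - ε - d.r) t := hL
  linarith
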